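/- Suppose for each i ∈ {1,...,I} the set J*_i maximizes total weight w(J') among subsets J' ⊆ J with D(J') ≤ 2^i, and let w with 0 < w < w(J) and i minimal with w(J*_i) ≥ w(J) − w. If i ≥ 2, then in any tour π' of all leaves of the star (starting and ending at the center), the total length of round trips completed with accumulated weight at least w exceeds 2^{i-1}. -/

import Mathlib

/-- Total round-trip distance of a set of leaves of the star. -/
def Dsum (N : ℕ) (d : Fin N → ℝ) (J' : Finset (Fin N)) : ℝ := ∑ v ∈ J', 2 * d v

/-- Total weight of a set of leaves. -/
def wsum (N : ℕ) (wt : Fin N → ℝ) (J' : Finset (Fin N)) : ℝ := ∑ v ∈ J', wt v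

/-- `D^σ(w')` for a star tour `σ` (see stmt_11). -/
noncomputable def Dthresh (N : ℕ) (d wt : Fin N → ℝ) (σ : Equiv.Perm (Fin N)) (w' : ℝ) : ℝ :=
  ∑ k ∈ Finset.univ.filter (fun k : Fin N => w' ≤ ∑ j ∈ Finset.Iic k, wt (σ j)),
    2 * d (σ k)

/-- If each `S k = J*_k` maximizes total weight among leaf sets of round-trip distance at
most `2^k`, and `i ≥ 2` is minimal with `w(J*_i) ≥ w(J) − w'`, then in any tour `π'`
of all leaves the total length of round trips completed with accumulated weight at
least `w'` exceeds `2^{i-1}`. -/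
theorem stmt_19 (N I i : ℕ) (hi2 : 2 ≤ i) (hiI : i ≤ I) (d wt : Fin N → ℝ)
    (hd : ∀ v, 1 ≤ d v) (hw : ∀ v, 0 ≤ wt v)
    (S : ℕ → Finset (Fin N))
    (hSfeas : ∀ k, 1 ≤ k → k ≤ I → Dsum N d (S k) ≤ 2 ^ k)
    (hSopt : ∀ k, 1 ≤ k → k ≤ I →
      ∀ J' : Finset (Fin N), Dsum N d J' ≤ 2 ^ k → wsum N wt J' ≤ wsum N wt (S k))
    (w' : ℝ) (hw'0 : 0 < w') (hw'1 : w' < wsum N wt Finset.univ)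
    (hi : wsum N wt Finset.univ - w' ≤ wsum N wt (S i))
    (hmin : ∀ k, 1 ≤ k → k < i → wsum N wt (S k) < wsum N wt Finset.univ - w')
    (π' : Equiv.Perm (Fin N)) :
    (2 : ℝ) ^ (i - 1) < Dthresh N d wt π' w' := by
  by_contra hcon
  push_neg at hcon
  set p : Fin N → ℝ := fun k => ∑ j ∈ Finset.Iic k, wt (π' j) with hp
  have hpmono : ∀ a b : Fin N, a ≤ b → p a ≤ p b := by
    intro a b hab
    apply Finset.sum_le_sum_of_subset_of_nonneg
    · intro x hx
      simp only [Finset.mem_Iic] at *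
      exact le_trans hx hab
    · intro x _ _; exact hw _
  set A : Finset (Fin N) := Finset.univ.filter (fun k => w' ≤ p k) with hA
  set B : Finset (Fin N) := Finset.univ.filter (fun k => ¬ w' ≤ p k) with hB
  have hinj : ∀ a ∈ A, ∀ b ∈ A, π' a = π' b → a = b := fun a _ b _ h => π'.injective h
  have hD : Dsum N d (A.image π') = Dthresh N d wt π' w' := by
    rw [Dsum, Finset.sum_image hinj]; rfl
  have hBsum : ∑ k ∈ B, wt (π' k) < w' := by
    rcases B.eq_empty_or_nonempty with hBe | hBne
    · rw [hBe]; simpa using hw'0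
    · obtain ⟨m, hmB, hmax⟩ := B.exists_max_image id hBne
      have hmlt : p m < w' := by
        have := (Finset.mem_filter.mp hmB).2
        linarith [lt_of_not_ge this]
      have hBsub : B = Finset.Iic m := by
        ext k
        simp only [hB, Finset.mem_filter, Finset.mem_univ, true_and, Finset.mem_Iic, not_le]
        constructor
        · intro hk
          exact hmax k (Finset.mem_filter.mpr ⟨Finset.mem_univ k, not_le.mpr hk⟩)
        · intro hk
          exact lt_of_le_of_lt (hpmono k m hk) hmlt
      rw [hBsub]
      exact hmlt
  have hsplit : (∑ k ∈ A, wt (π' k)) + (∑ k ∈ B, wt (π' k)) = wsum N wt Finset.univ := by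
    rw [Finset.sum_filter_add_sum_filter_not]
    rw [wsum]
    exact Equiv.sum_comp π' wt
  have hwA : wsum N wt Finset.univ - w' < wsum N wt (A.image π') := by
    have himg : wsum N wt (A.image π') = ∑ k ∈ A, wt (π' k) := Finset.sum_image hinj
    linarith
  have h1i : 1 ≤ i - 1 := by omega
  have hiI' : i - 1 ≤ I := by omega
  have hfeas : Dsum N d (A.image π') ≤ 2 ^ (i - 1) := by rw [hD]; exact hcon
  have := hSopt (i - 1) h1i hiI' (A.image π') hfeas
  have := hmin (i - 1) h1i (by omega)
  linarith
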